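/- Let 1 ≤ a and a+l-1 ≤ k, and let p(n) = p_{a,l}^k(n) be the number of P_{a,l}^k-avoiding permutations in S_n. Then for all n ≥ k: p(n) = (k-l) · Σ_{j=0}^{l-1} j! · binom(n-k+l, j) · p(n-1-j). -/

import Mathlib

open Finset

/-- `π` contains an occurrence of the generalized pattern given by `σ ∈ S_k`,
where `adj j` means that positions `j` and `j+1` of the pattern must be
matched to adjacent positions of the permutation. -/
def IsOcc {n k : ℕ} (π : Equiv.Perm (Fin n)) (σ : Equiv.Perm (Fin k)) (adj : ℕ → Prop) : Prop :=
  ∃ ι : Fin k → Fin n, StrictMono ι ∧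
    (∀ j : ℕ, ∀ hj : j + 1 < k, adj j → (ι ⟨j + 1, hj⟩ : ℕ) = (ι ⟨j, by omega⟩ : ℕ) + 1) ∧
    (∀ s t : Fin k, σ s < σ t ↔ π (ι s) < π (ι t))

/-- `π` avoids every pattern in `P_{a,l}^k` (first `l` letters a permutation of
`{a, …, a+l-1}`, matched to consecutive positions); values are `1`-based. -/
def AvoidsP (a l k : ℕ) {n : ℕ} (π : Equiv.Perm (Fin n)) : Prop :=
  ∀ σ : Equiv.Perm (Fin k),
    (∀ j : Fin k, (j : ℕ) < l → a ≤ (σ j : ℕ) + 1 ∧ (σ j : ℕ) + 1 ≤ a + l - 1) →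
    ¬ IsOcc π σ (fun j => j + 1 < l)

/-- `p_{a,l}^k(n)`. -/
noncomputable def pP (a l k n : ℕ) : ℕ :=
  Nat.card {π : Equiv.Perm (Fin n) // AvoidsP a l k π}

/-- `p_{a,l}^k(n; i₁, …, i_m)`: additionally the permutation begins with the
letters `v 0, v 1, …` (1-based values). -/
noncomputable def pPf (a l k n : ℕ) {m : ℕ} (v : Fin m → ℕ) : ℕ :=
  Nat.card {π : Equiv.Perm (Fin n) // AvoidsP a l k π ∧
    ∀ t : Fin m, ∀ ht : (t : ℕ) < n, (π ⟨t, ht⟩ : ℕ) + 1 = v t}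

namespace PRec

open scoped Classical

variable {a l k n j : ℕ}

/-- Extreme values: among the `a-1` smallest or the `k-l-(a-1)` largest. -/
def ExtV (a l k : ℕ) {n : ℕ} (v : Fin n) : Prop :=
  (v : ℕ) < a - 1 ∨ n - (k - l - (a - 1)) ≤ (v : ℕ)

def Win (l i : ℕ) {n : ℕ} (s : Fin n) : Prop := i ≤ (s : ℕ) ∧ (s : ℕ) < i + l

noncomputable def loF (l : ℕ) {n : ℕ} (f : Fin n → Fin n) (i : ℕ) : Finset (Fin n) :=
  Finset.univ.filter fun t => i + l ≤ (t : ℕ) ∧ ∀ s : Fin n, Win l i s → f t < f s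

noncomputable def hiF (l : ℕ) {n : ℕ} (f : Fin n → Fin n) (i : ℕ) : Finset (Fin n) :=
  Finset.univ.filter fun t => i + l ≤ (t : ℕ) ∧ ∀ s : Fin n, Win l i s → f s < f t

def Av (a l k : ℕ) {n : ℕ} (f : Fin n → Fin n) : Prop :=
  ∀ i, i + l ≤ n → (loF l f i).card < a - 1 ∨ (hiF l f i).card < k - l - (a - 1)

lemma mem_loF {f : Fin n → Fin n} {i : ℕ} {t : Fin n} :
    t ∈ loF l f i ↔ i + l ≤ (t : ℕ) ∧ ∀ s : Fin n, Win l i s → f t < f s := by simp [loF]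

lemma mem_hiF {f : Fin n → Fin n} {i : ℕ} {t : Fin n} :
    t ∈ hiF l f i ↔ i + l ≤ (t : ℕ) ∧ ∀ s : Fin n, Win l i s → f s < f t := by simp [hiF]

lemma card_filter_lt {c : ℕ} (hc : c ≤ n) :
    (univ.filter fun v : Fin n => (v : ℕ) < c).card = c := by
  apply Finset.card_eq_of_bijective (fun i hi => ⟨i, lt_of_lt_of_le hi hc⟩)
  · intro v hv
    simp only [mem_filter, mem_univ, true_and] at hv
    exact ⟨v, hv, rfl⟩
  · intro i h; simp [h]
  · intro i j hi hj hij; simpa [Fin.ext_iff] using hij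

lemma card_filter_val_lt (π : Equiv.Perm (Fin n)) {c : ℕ} (hc : c ≤ n) :
    (univ.filter fun t : Fin n => (π t : ℕ) < c).card = c := by
  have h1 : (univ.filter fun t : Fin n => (π t : ℕ) < c).card
      = (univ.filter fun v : Fin n => (v : ℕ) < c).card := by
    apply Finset.card_bij' (fun t _ => π t) (fun v _ => π.symm v) <;> simp
  rw [h1]
  apply Finset.card_eq_of_bijective (fun i hi => ⟨i, lt_of_lt_of_le hi hc⟩)
  · intro v hv
    simp only [mem_filter, mem_univ, true_and] at hv
    exact ⟨v, hv, rfl⟩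
  · intro i h; simp [h]
  · intro i j hi hj hij
    simpa [Fin.ext_iff] using hij

lemma card_filter_val_ge (π : Equiv.Perm (Fin n)) {c : ℕ} (hc : c ≤ n) :
    (univ.filter fun t : Fin n => c ≤ (π t : ℕ)).card = n - c := by
  have key := Finset.card_filter_add_card_filter_not
    (s := (univ : Finset (Fin n))) (p := fun t : Fin n => (π t : ℕ) < c)
  have h2 : (univ.filter fun t : Fin n => ¬ ((π t : ℕ) < c))
      = (univ.filter fun t : Fin n => c ≤ (π t : ℕ)) := by
    apply filter_congr; intro t _; exact not_lt
  rw [card_filter_val_lt π hc, h2, card_univ, Fintype.card_fin] at key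
  omega

/-- pattern of an injection -/
lemma exists_pattern {f : Fin k → Fin n} (hf : Function.Injective f) :
    ∃ σ : Equiv.Perm (Fin k), ∀ s t : Fin k, σ s < σ t ↔ f s < f t := by
  have hcard : (univ.image f).card = k := by
    rw [card_image_of_injective _ hf, card_univ, Fintype.card_fin]
  set oe := (univ.image f).orderIsoOfFin hcard with hoe
  have hmem : ∀ t, f t ∈ univ.image f := fun t => mem_image_of_mem f (mem_univ t)
  set g : Fin k → Fin k := fun t => oe.symm ⟨f t, hmem t⟩ with hg
  have hginj : Function.Injective g := by
    intro s t hst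
    apply hf
    have := oe.symm.injective hst
    exact congrArg Subtype.val this
  refine ⟨Equiv.ofBijective g (Finite.injective_iff_bijective.mp hginj), fun s t => ?_⟩
  simp only [Equiv.ofBijective_apply, hg]
  rw [oe.symm.lt_iff_lt, Subtype.mk_lt_mk]


lemma not_avoids_of_window (ha : 1 ≤ a) (hl : 1 ≤ l) (hk : a + l - 1 ≤ k)
    (π : Equiv.Perm (Fin n)) {i : ℕ} (hi : i + l ≤ n)
    (hA : a - 1 ≤ (loF l (⇑π) i).card) (hB : k - l - (a - 1) ≤ (hiF l (⇑π) i).card) :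
    ¬ AvoidsP a l k π := by
  have hlk : l ≤ k := by omega
  have ha1 : a - 1 ≤ k - l := by omega
  obtain ⟨Lo, hLos, hLoc⟩ := Finset.exists_subset_card_eq hA
  obtain ⟨Hi, hHis, hHic⟩ := Finset.exists_subset_card_eq hB
  have hs0 : i < n := by omega
  have hw0 : Win l i (⟨i, hs0⟩ : Fin n) := ⟨by simp, by simp; omega⟩
  have hdisj : Disjoint Lo Hi := by
    rw [Finset.disjoint_left]
    intro u h1 h2
    have hu1 := (mem_loF.mp (hLos h1)).2 _ hw0
    have hu2 := (mem_hiF.mp (hHis h2)).2 _ hw0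
    exact absurd hu1 (asymm hu2)
  set C := Lo ∪ Hi with hCdef
  have hC : C.card = k - l := by
    rw [card_union_of_disjoint hdisj]; omega
  have hCge : ∀ u ∈ C, i + l ≤ (u : ℕ) := by
    intro u hu
    rcases mem_union.mp hu with h | h
    · exact (mem_loF.mp (hLos h)).1
    · exact (mem_hiF.mp (hHis h)).1
  set cemb := C.orderEmbOfFin hC with hcemb
  set ι : Fin k → Fin n := fun t =>
    if h : (t : ℕ) < l then ⟨i + (t : ℕ), by omega⟩
    else cemb ⟨(t : ℕ) - l, by omega⟩ with hι
  have hι_lt : ∀ (t : Fin k) (h : (t : ℕ) < l), ι t = ⟨i + (t : ℕ), by omega⟩ := by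
    intro t h; simp only [hι, dif_pos h]
  have hι_ge : ∀ (t : Fin k) (h : l ≤ (t : ℕ)), ι t = cemb ⟨(t : ℕ) - l, by omega⟩ := by
    intro t h; simp only [hι]; rw [dif_neg (by omega)]
  have hcembge : ∀ x : Fin (k - l), i + l ≤ (cemb x : ℕ) :=
    fun x => hCge _ (Finset.orderEmbOfFin_mem C hC x)
  have hv_lt : ∀ (t : Fin k) (h : (t : ℕ) < l), (ι t : ℕ) = i + (t : ℕ) := by
    intro t h; rw [hι_lt t h]
  have hv_ge : ∀ (t : Fin k) (h : l ≤ (t : ℕ)),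
      (ι t : ℕ) = (cemb ⟨(t : ℕ) - l, by omega⟩ : ℕ) := by
    intro t h; rw [hι_ge t h]
  have hmono : StrictMono ι := by
    intro s t hst
    rw [Fin.lt_def] at hst
    rw [Fin.lt_def]
    by_cases hs : (s : ℕ) < l <;> by_cases ht : (t : ℕ) < l
    · rw [hv_lt s hs, hv_lt t ht]; omega
    · rw [hv_lt s hs, hv_ge t (by omega)]
      exact lt_of_lt_of_le (by omega) (hcembge _)
    · omega
    · rw [hv_ge s (by omega), hv_ge t (by omega)]
      exact cemb.strictMono (Fin.mk_lt_mk.mpr (by omega))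
  obtain ⟨σ, hσ⟩ := exists_pattern (f := fun t => π (ι t))
    (fun s t hst => hmono.injective (π.injective hst))
  -- rank bounds
  have hvals : ∀ j : Fin k, (j : ℕ) < l → a ≤ (σ j : ℕ) + 1 ∧ (σ j : ℕ) + 1 ≤ a + l - 1 := by
    intro j hjl
    have hwj : Win l i (ι j) := by
      constructor
      · rw [hv_lt j hjl]; omega
      · rw [hv_lt j hjl]; omega
    have hrank : (univ.filter fun t : Fin k => σ t < σ j).card = (σ j : ℕ) := by
      have := card_filter_val_lt (n := k) σ (c := (σ j : ℕ)) (le_of_lt (σ j).isLt)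
      rw [← this]
      apply congrArg
      apply filter_congr
      intro t _
      rw [Fin.lt_def]
    set Tlo := univ.filter (fun t : Fin k => l ≤ (t : ℕ) ∧ ι t ∈ Lo) with hTlo
    have hTloc : Tlo.card = a - 1 := by
      rw [← hLoc]
      apply Finset.card_bij (fun t _ => ι t)
      · intro t ht; exact ((mem_filter.mp ht).2).2
      · intro s hs t ht hst; exact hmono.injective hst
      · intro u hu
        have huC : u ∈ C := mem_union_left _ hu
        have : u ∈ Set.range ⇑cemb := by
          rw [Finset.range_orderEmbOfFin]; exact huC
        obtain ⟨x, hx⟩ := this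
        have hxk : (x : ℕ) + l < k := by omega
        have hιx : ι ⟨(x : ℕ) + l, hxk⟩ = u := by
          rw [hι_ge _ (by simp)]
          rw [← hx]
          congr 1
          apply Fin.ext
          simp
        refine ⟨⟨(x : ℕ) + l, hxk⟩, ?_, hιx⟩
        rw [mem_filter]
        exact ⟨mem_univ _, by simp, by rw [hιx]; exact hu⟩
    have hlow : Tlo ⊆ univ.filter fun t : Fin k => σ t < σ j := by
      intro t ht
      obtain ⟨-, -, htLo⟩ := mem_filter.mp ht
      rw [mem_filter]
      refine ⟨mem_univ _, ?_⟩
      rw [hσ]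
      exact (mem_loF.mp (hLos htLo)).2 _ hwj
    have hup : (univ.filter fun t : Fin k => σ t < σ j) ⊆
        Tlo ∪ ((univ.filter fun t : Fin k => (t : ℕ) < l).erase j) := by
      intro t ht
      have htj : σ t < σ j := (mem_filter.mp ht).2
      have hftj : π (ι t) < π (ι j) := (hσ t j).mp htj
      by_cases htl : (t : ℕ) < l
      · apply mem_union_right
        rw [mem_erase]
        refine ⟨fun h => absurd hftj (by rw [h]; exact lt_irrefl _), by simp [htl]⟩
      · apply mem_union_left
        rw [hTlo, mem_filter]
        refine ⟨mem_univ _, by omega, ?_⟩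
        have hmC : ι t ∈ C := by
          rw [hι_ge t (by omega)]
          exact Finset.orderEmbOfFin_mem C hC _
        rcases mem_union.mp hmC with h | h
        · exact h
        · exact absurd ((mem_hiF.mp (hHis h)).2 _ hwj) (asymm hftj)
    have herase : ((univ.filter fun t : Fin k => (t : ℕ) < l).erase j).card = l - 1 := by
      rw [Finset.card_erase_of_mem (by simp [hjl]), card_filter_lt hlk]
    have hub := card_le_card hup
    have := (Finset.card_union_le Tlo ((univ.filter fun t : Fin k => (t : ℕ) < l).erase j))
    have hlb := card_le_card hlow
    rw [hrank] at hub hlb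
    rw [hTloc] at hlb
    omega
  intro hav
  refine hav σ hvals ⟨ι, hmono, ?_, hσ⟩
  intro j hj hadj
  have e1 : (ι ⟨j + 1, hj⟩ : ℕ) = i + (j + 1) := hv_lt _ hadj
  have e2 : (ι ⟨j, by omega⟩ : ℕ) = i + j := hv_lt _ (by simpa using Nat.lt_of_succ_lt hadj)
  omega

lemma window_of_not_avoids (ha : 1 ≤ a) (hl : 1 ≤ l) (hk : a + l - 1 ≤ k)
    (π : Equiv.Perm (Fin n)) (h : ¬ AvoidsP a l k π) :
    ∃ i, i + l ≤ n ∧ a - 1 ≤ (loF l (⇑π) i).card ∧ k - l - (a - 1) ≤ (hiF l (⇑π) i).card := by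
  unfold AvoidsP at h
  push_neg at h
  obtain ⟨σ, hvals, ι, hmono, hadj, hiff⟩ := h
  have hlk : l ≤ k := by omega
  have hk1 : 0 < k := by omega
  set i := (ι ⟨0, hk1⟩ : ℕ) with hidef
  have hpos : ∀ d, ∀ hd : d < l, (ι ⟨d, by omega⟩ : ℕ) = i + d := by
    intro d
    induction d with
    | zero => intro _; simp [hidef]
    | succ m ih =>
      intro hd
      have hm := ih (by omega)
      have hstep := hadj m (by omega) hd
      omega
  have hil : i + l ≤ n := by
    have h1 := hpos (l - 1) (by omega)
    have h2 := (ι ⟨l - 1, by omega⟩).isLt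
    omega
  -- window positions are exactly ι ⟨d⟩ for d < l
  have hwin : ∀ s : Fin n, Win l i s → ∃ d, ∃ hd : d < l, s = ι ⟨d, by omega⟩ := by
    intro s hs
    refine ⟨(s : ℕ) - i, by rcases hs with ⟨h1, h2⟩; omega, ?_⟩
    apply Fin.ext
    rw [hpos _ (by rcases hs with ⟨h1, h2⟩; omega)]
    rcases hs with ⟨h1, h2⟩
    omega
  have hnotwin : ∀ t : Fin k, l ≤ (t : ℕ) → i + l ≤ (ι t : ℕ) := by
    intro t ht
    have : (⟨l - 1, by omega⟩ : Fin k) < t := by rw [Fin.lt_def]; simp; omega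
    have := hmono this
    rw [Fin.lt_def] at this
    rw [hpos (l - 1) (by omega)] at this
    omega
  have hbnd : ∀ t : Fin k, (t : ℕ) < l → a - 1 ≤ (σ t : ℕ) ∧ (σ t : ℕ) + 1 ≤ a + l - 1 := by
    intro t ht
    have := hvals t ht
    omega
  refine ⟨i, hil, ?_, ?_⟩
  · set T := univ.filter (fun t : Fin k => (σ t : ℕ) < a - 1) with hT
    have hTcard : T.card = a - 1 := card_filter_val_lt σ (by omega)
    have himg : T.image ι ⊆ loF l (⇑π) i := by
      intro u hu
      obtain ⟨t, ht, rfl⟩ := mem_image.mp hu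
      rw [hT, mem_filter] at ht
      have htl : ¬ ((t : ℕ) < l) := fun hc => by have := (hbnd t hc).1; omega
      rw [mem_loF]
      refine ⟨hnotwin t (by omega), ?_⟩
      intro s hs
      obtain ⟨d, hd, rfl⟩ := hwin s hs
      rw [← hiff]
      rw [Fin.lt_def]
      have := (hbnd ⟨d, by omega⟩ (by simpa using hd)).1
      omega
    have := card_le_card himg
    rw [Finset.card_image_of_injective _ hmono.injective, hTcard] at this
    exact this
  · set T := univ.filter (fun t : Fin k => a + l - 1 ≤ (σ t : ℕ)) with hT
    have hTcard : T.card = k - (a + l - 1) := card_filter_val_ge σ (by omega)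
    have himg : T.image ι ⊆ hiF l (⇑π) i := by
      intro u hu
      obtain ⟨t, ht, rfl⟩ := mem_image.mp hu
      rw [hT, mem_filter] at ht
      have htl : ¬ ((t : ℕ) < l) := fun hc => by have := (hbnd t hc).2; omega
      rw [mem_hiF]
      refine ⟨hnotwin t (by omega), ?_⟩
      intro s hs
      obtain ⟨d, hd, rfl⟩ := hwin s hs
      rw [← hiff]
      rw [Fin.lt_def]
      have := (hbnd ⟨d, by omega⟩ (by simpa using hd)).2
      omega
    have := card_le_card himg
    rw [Finset.card_image_of_injective _ hmono.injective, hTcard] at this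
    omega

lemma avoids_iff_av (ha : 1 ≤ a) (hl : 1 ≤ l) (hk : a + l - 1 ≤ k)
    (π : Equiv.Perm (Fin n)) : AvoidsP a l k π ↔ Av a l k (⇑π) := by
  constructor
  · intro hav i hi
    by_contra hcon
    push_neg at hcon
    exact not_avoids_of_window ha hl hk π hi hcon.1 hcon.2 hav
  · intro hav
    by_contra hvio
    obtain ⟨i, hi, hA, hB⟩ := window_of_not_avoids ha hl hk π hvio
    rcases hav i hi with h | h <;> omega

lemma window_safe (ha : 1 ≤ a) (hk : a + l - 1 ≤ k)
    (π : Equiv.Perm (Fin n)) {i : ℕ} (hi : i + l ≤ n) (s0 : Fin n) (hw : Win l i s0)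
    (he : ExtV a l k (π s0)) :
    (loF l (⇑π) i).card < a - 1 ∨ (hiF l (⇑π) i).card < k - l - (a - 1) := by
  have hval : (π s0 : ℕ) < n := (π s0).isLt
  rcases he with hv | hv
  · left
    have hsub : loF l (⇑π) i ⊆ univ.filter fun t : Fin n => (π t : ℕ) < (π s0 : ℕ) := by
      intro t ht
      rw [mem_loF] at ht
      simpa using ht.2 s0 hw
    have := card_le_card hsub
    rw [card_filter_val_lt π (le_of_lt hval)] at this
    omega
  · right
    have hsub : hiF l (⇑π) i ⊆ univ.filter fun t : Fin n => (π s0 : ℕ) + 1 ≤ (π t : ℕ) := by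
      intro t ht
      rw [mem_hiF] at ht
      have := ht.2 s0 hw
      simp only [mem_filter, mem_univ, true_and]
      omega
    have := card_le_card hsub
    rw [card_filter_val_ge π (by omega)] at this
    omega

lemma exists_ext (ha : 1 ≤ a) (hl : 1 ≤ l) (hk : a + l - 1 ≤ k) (hn : k ≤ n)
    (π : Equiv.Perm (Fin n)) (hav : Av a l k (⇑π)) :
    ∃ p, ∃ hp : p < l, ExtV a l k (π ⟨p, by omega⟩) := by
  by_contra hcon
  push_neg at hcon
  have hln : l ≤ n := by omega
  have hmid : ∀ s : Fin n, (s : ℕ) < l →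
      a - 1 ≤ (π s : ℕ) ∧ (π s : ℕ) < n - (k - l - (a - 1)) := by
    intro s hs
    have := hcon s hs
    simp only [Fin.eta] at this
    unfold ExtV at this
    push_neg at this
    omega
  have h1 : (univ.filter fun t : Fin n => (π t : ℕ) < a - 1) ⊆ loF l (⇑π) 0 := by
    intro t ht
    simp only [mem_filter, mem_univ, true_and] at ht
    rw [mem_loF]
    constructor
    · simp only [zero_add]
      by_contra htl
      exact absurd ht (by have := (hmid t (by omega)).1; omega)
    · intro s hs
      have := (hmid s (by simpa [Win] using hs.2)).1
      exact Fin.lt_def.mpr (by omega)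
  have h2 : (univ.filter fun t : Fin n => n - (k - l - (a - 1)) ≤ (π t : ℕ)) ⊆ hiF l (⇑π) 0 := by
    intro t ht
    simp only [mem_filter, mem_univ, true_and] at ht
    rw [mem_hiF]
    constructor
    · simp only [zero_add]
      by_contra htl
      exact absurd ht (by have := (hmid t (by omega)).2; omega)
    · intro s hs
      have := (hmid s (by simpa [Win] using hs.2)).2
      exact Fin.lt_def.mpr (by omega)
  have c1 := card_le_card h1
  have c2 := card_le_card h2
  rw [card_filter_val_lt π (by omega)] at c1
  rw [card_filter_val_ge π (by omega)] at c2
  rcases hav 0 (by omega) with h | h <;> omega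

/-- Shift positions by `j+1`. -/
def posEmb (n j : ℕ) : Fin (n - 1 - j) → Fin n := fun t => ⟨(t : ℕ) + (j + 1), by omega⟩

lemma posEmb_injective : Function.Injective (posEmb n j) := by
  intro s t h
  apply Fin.ext
  have := congrArg Fin.val h
  simpa [posEmb] using this

/-- The set of the first `j+1` values of `π`. -/
noncomputable def Vset (j : ℕ) (π : Equiv.Perm (Fin n)) : Finset (Fin n) :=
  (univ.filter fun t : Fin n => (t : ℕ) < j + 1).image ⇑π

lemma card_Vset_compl (hj : j + 1 ≤ n) (π : Equiv.Perm (Fin n)) :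
    (Vset j π)ᶜ.card = n - 1 - j := by
  rw [card_compl, Vset, Finset.card_image_of_injective _ π.injective,
    card_filter_lt hj, Fintype.card_fin]
  omega

lemma mem_Vset_compl (π : Equiv.Perm (Fin n)) (t : Fin (n - 1 - j)) :
    π (posEmb n j t) ∈ (Vset j π)ᶜ := by
  rw [mem_compl]
  intro hmem
  obtain ⟨s, hs, heq⟩ := mem_image.mp hmem
  have := π.injective heq
  simp only [mem_filter, mem_univ, true_and] at hs
  rw [this] at hs
  simp [posEmb] at hs
  omega

/-- Delete the first `j+1` letters and renumber (order-isomorphically). -/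
noncomputable def del (hj : j + 1 ≤ n) (π : Equiv.Perm (Fin n)) : Equiv.Perm (Fin (n - 1 - j)) :=
  Equiv.ofBijective
    (fun t => ((Vset j π)ᶜ.orderIsoOfFin (card_Vset_compl hj π)).symm
      ⟨π (posEmb n j t), mem_Vset_compl π t⟩)
    (Finite.injective_iff_bijective.mp (by
      intro s t h
      have h2 := congrArg Subtype.val (((Vset j π)ᶜ.orderIsoOfFin (card_Vset_compl hj π)).symm.injective h)
      exact posEmb_injective (π.injective h2)))

lemma del_spec (hj : j + 1 ≤ n) (π : Equiv.Perm (Fin n)) (t : Fin (n - 1 - j)) :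
    (((Vset j π)ᶜ.orderIsoOfFin (card_Vset_compl hj π)) (del hj π t) : Fin n)
      = π (posEmb n j t) := by
  simp [del, Equiv.ofBijective_apply]

lemma del_lt_iff (hj : j + 1 ≤ n) (π : Equiv.Perm (Fin n)) (s t : Fin (n - 1 - j)) :
    del hj π s < del hj π t ↔ π (posEmb n j s) < π (posEmb n j t) := by
  rw [← del_spec hj π s, ← del_spec hj π t, Subtype.coe_lt_coe, OrderIso.lt_iff_lt]

variable {v : Fin (j + 1) → Fin n}

lemma card_image_compl (hj : j + 1 ≤ n) (hv : Function.Injective v) :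
    ((univ : Finset (Fin (j + 1))).image v)ᶜ.card = n - 1 - j := by
  rw [card_compl, Finset.card_image_of_injective _ hv, card_univ, Fintype.card_fin,
    Fintype.card_fin]
  omega

/-- Enumeration of the complement of the prefix values. -/
noncomputable def cEmb (hj : j + 1 ≤ n) (hv : Function.Injective v) :
    Fin (n - 1 - j) → Fin n :=
  fun x => (((univ : Finset (Fin (j + 1))).image v)ᶜ.orderIsoOfFin (card_image_compl hj hv) x : Fin n)

lemma cEmb_mem (hj : j + 1 ≤ n) (hv : Function.Injective v) (x : Fin (n - 1 - j)) :
    cEmb hj hv x ∈ ((univ : Finset (Fin (j + 1))).image v)ᶜ :=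
  (((univ : Finset (Fin (j + 1))).image v)ᶜ.orderIsoOfFin (card_image_compl hj hv) x).2

/-- Insert the prefix `v` in front of (the renumbered) `σ`. -/
noncomputable def ins (hj : j + 1 ≤ n) (hv : Function.Injective v)
    (σ : Equiv.Perm (Fin (n - 1 - j))) : Equiv.Perm (Fin n) :=
  Equiv.ofBijective
    (fun t => if h : (t : ℕ) < j + 1 then v ⟨t, h⟩
      else cEmb hj hv (σ ⟨(t : ℕ) - (j + 1), by omega⟩))
    (Finite.injective_iff_bijective.mp (by
      intro s t h
      simp only [] at h
      by_cases hs : (s : ℕ) < j + 1 <;> by_cases ht : (t : ℕ) < j + 1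
      · rw [dif_pos hs, dif_pos ht] at h
        have := hv h
        apply Fin.ext
        simpa [Fin.ext_iff] using this
      · rw [dif_pos hs, dif_neg ht] at h
        exact absurd (h ▸ mem_image_of_mem v (mem_univ _)) (mem_compl.mp (cEmb_mem hj hv _))
      · rw [dif_neg hs, dif_pos ht] at h
        exact absurd (h ▸ mem_image_of_mem v (mem_univ _)) (mem_compl.mp (cEmb_mem hj hv _))
      · rw [dif_neg hs, dif_neg ht] at h
        have h2 := (((univ : Finset (Fin (j + 1))).image v)ᶜ.orderIsoOfFin
            (card_image_compl hj hv)).injective (Subtype.coe_injective h)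
        have h3 := σ.injective h2
        rw [Fin.mk.injEq] at h3
        apply Fin.ext
        omega))

example : True := trivial

lemma ins_apply_lt (hj : j + 1 ≤ n) (hv : Function.Injective v)
    (σ : Equiv.Perm (Fin (n - 1 - j))) (t : Fin n) (h : (t : ℕ) < j + 1) :
    ins hj hv σ t = v ⟨t, h⟩ := by
  simp only [ins, Equiv.ofBijective_apply]
  rw [dif_pos h]

lemma ins_apply_suffix (hj : j + 1 ≤ n) (hv : Function.Injective v)
    (σ : Equiv.Perm (Fin (n - 1 - j))) (u : Fin (n - 1 - j)) :
    ins hj hv σ (posEmb n j u) = cEmb hj hv (σ u) := by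
  simp only [ins, Equiv.ofBijective_apply]
  rw [dif_neg (by simp [posEmb]; omega)]
  congr 2
  apply Fin.ext
  simp [posEmb]

lemma Vset_ins (hj : j + 1 ≤ n) (hv : Function.Injective v)
    (σ : Equiv.Perm (Fin (n - 1 - j))) :
    Vset j (ins hj hv σ) = (univ : Finset (Fin (j + 1))).image v := by
  ext u
  simp only [Vset, mem_image, mem_filter, mem_univ, true_and]
  constructor
  · rintro ⟨t, ht, rfl⟩
    exact ⟨⟨t, ht⟩, (ins_apply_lt hj hv σ t ht).symm⟩
  · rintro ⟨s, rfl⟩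
    refine ⟨⟨(s : ℕ), by omega⟩, (by simp; omega), ?_⟩
    rw [ins_apply_lt hj hv σ _ (by simp; omega)]

lemma orderIsoOfFin_congr {α : Type*} [LinearOrder α] {s s' : Finset α} (h : s = s')
    {m : ℕ} (h1 : s.card = m) (h2 : s'.card = m) (x : Fin m) :
    (s.orderIsoOfFin h1 x : α) = (s'.orderIsoOfFin h2 x : α) := by subst h; rfl

lemma del_ins (hj : j + 1 ≤ n) (hv : Function.Injective v)
    (σ : Equiv.Perm (Fin (n - 1 - j))) : del hj (ins hj hv σ) = σ := by
  apply Equiv.ext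
  intro t
  have h1 := del_spec hj (ins hj hv σ) t
  rw [ins_apply_suffix] at h1
  have h2 : (((Vset j (ins hj hv σ))ᶜ.orderIsoOfFin (card_Vset_compl hj _)) (σ t) : Fin n)
      = cEmb hj hv (σ t) := orderIsoOfFin_congr (by rw [Vset_ins]) _ _ _
  exact ((Vset j (ins hj hv σ))ᶜ.orderIsoOfFin (card_Vset_compl hj _)).injective
    (Subtype.coe_injective (h1.trans h2.symm))

lemma Vset_eq_image (hj : j + 1 ≤ n) (π : Equiv.Perm (Fin n))
    (hpre : ∀ s : Fin (j + 1), π ⟨(s : ℕ), by omega⟩ = v s) :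
    Vset j π = (univ : Finset (Fin (j + 1))).image v := by
  ext u
  simp only [Vset, mem_image, mem_filter, mem_univ, true_and]
  constructor
  · rintro ⟨t, ht, rfl⟩
    refine ⟨⟨(t : ℕ), ht⟩, ?_⟩
    rw [← hpre ⟨(t : ℕ), ht⟩]
  · rintro ⟨s, rfl⟩
    exact ⟨⟨(s : ℕ), by omega⟩, (by simp; omega), hpre s⟩

lemma ins_del (hj : j + 1 ≤ n) (π : Equiv.Perm (Fin n)) (hv : Function.Injective v)
    (hpre : ∀ s : Fin (j + 1), π ⟨(s : ℕ), by omega⟩ = v s) :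
    ins hj hv (del hj π) = π := by
  apply Equiv.ext
  intro t
  by_cases h : (t : ℕ) < j + 1
  · rw [ins_apply_lt hj hv _ t h, ← hpre ⟨(t : ℕ), h⟩]
  · have ht : t = posEmb n j ⟨(t : ℕ) - (j + 1), by omega⟩ := by
      apply Fin.ext; simp [posEmb]; omega
    rw [ht, ins_apply_suffix]
    have h1 := del_spec hj π ⟨(t : ℕ) - (j + 1), by omega⟩
    rw [← h1]
    simp only [cEmb]
    exact orderIsoOfFin_congr (by rw [Vset_eq_image hj π hpre]) _ _ _

lemma loF_del_card (hj : j + 1 ≤ n) (π : Equiv.Perm (Fin n)) {i' : ℕ}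
    (hi' : i' + l ≤ n - 1 - j) :
    (loF l (⇑π) (i' + (j + 1))).card = (loF l (⇑(del hj π)) i').card := by
  have himg : loF l (⇑π) (i' + (j + 1)) = (loF l (⇑(del hj π)) i').image (posEmb n j) := by
    ext u
    simp only [mem_image]
    constructor
    · intro hu
      rw [mem_loF] at hu
      have hu1 := hu.1
      have hpe : posEmb n j ⟨(u : ℕ) - (j + 1), by omega⟩ = u := by
        apply Fin.ext
        show (u : ℕ) - (j + 1) + (j + 1) = (u : ℕ)
        omega
      refine ⟨⟨(u : ℕ) - (j + 1), by omega⟩, ?_, hpe⟩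
      rw [mem_loF]
      constructor
      · show i' + l ≤ (u : ℕ) - (j + 1)
        omega
      · intro s' hs'
        rw [del_lt_iff, hpe]
        apply hu.2
        refine ⟨?_, ?_⟩
        · show i' + (j + 1) ≤ (s' : ℕ) + (j + 1)
          have := hs'.1
          omega
        · show (s' : ℕ) + (j + 1) < i' + (j + 1) + l
          have := hs'.2
          omega
    · rintro ⟨t, ht, rfl⟩
      rw [mem_loF] at ht ⊢
      constructor
      · show i' + (j + 1) + l ≤ (t : ℕ) + (j + 1)
        have := ht.1
        omega
      · intro s hs
        have hsub : (s : ℕ) - (j + 1) < n - 1 - j := by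
          have h1 := hs.1
          have h2 := hs.2
          omega
        have hpe : posEmb n j ⟨(s : ℕ) - (j + 1), hsub⟩ = s := by
          apply Fin.ext
          show (s : ℕ) - (j + 1) + (j + 1) = (s : ℕ)
          have := hs.1
          omega
        have hw : Win l i' (⟨(s : ℕ) - (j + 1), hsub⟩ : Fin (n - 1 - j)) := by
          refine ⟨?_, ?_⟩
          · show i' ≤ (s : ℕ) - (j + 1)
            have := hs.1
            omega
          · show (s : ℕ) - (j + 1) < i' + l
            have h1 := hs.1
            have h2 := hs.2
            omega
        have := (del_lt_iff hj π t _).mp (ht.2 _ hw)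
        rwa [hpe] at this
  rw [himg, Finset.card_image_of_injective _ posEmb_injective]

lemma hiF_del_card (hj : j + 1 ≤ n) (π : Equiv.Perm (Fin n)) {i' : ℕ}
    (hi' : i' + l ≤ n - 1 - j) :
    (hiF l (⇑π) (i' + (j + 1))).card = (hiF l (⇑(del hj π)) i').card := by
  have himg : hiF l (⇑π) (i' + (j + 1)) = (hiF l (⇑(del hj π)) i').image (posEmb n j) := by
    ext u
    simp only [mem_image]
    constructor
    · intro hu
      rw [mem_hiF] at hu
      have hu1 := hu.1
      have hpe : posEmb n j ⟨(u : ℕ) - (j + 1), by omega⟩ = u := by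
        apply Fin.ext
        show (u : ℕ) - (j + 1) + (j + 1) = (u : ℕ)
        omega
      refine ⟨⟨(u : ℕ) - (j + 1), by omega⟩, ?_, hpe⟩
      rw [mem_hiF]
      constructor
      · show i' + l ≤ (u : ℕ) - (j + 1)
        omega
      · intro s' hs'
        rw [del_lt_iff, hpe]
        apply hu.2
        refine ⟨?_, ?_⟩
        · show i' + (j + 1) ≤ (s' : ℕ) + (j + 1)
          have := hs'.1
          omega
        · show (s' : ℕ) + (j + 1) < i' + (j + 1) + l
          have := hs'.2
          omega
    · rintro ⟨t, ht, rfl⟩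
      rw [mem_hiF] at ht ⊢
      constructor
      · show i' + (j + 1) + l ≤ (t : ℕ) + (j + 1)
        have := ht.1
        omega
      · intro s hs
        have hsub : (s : ℕ) - (j + 1) < n - 1 - j := by
          have h1 := hs.1
          have h2 := hs.2
          omega
        have hpe : posEmb n j ⟨(s : ℕ) - (j + 1), hsub⟩ = s := by
          apply Fin.ext
          show (s : ℕ) - (j + 1) + (j + 1) = (s : ℕ)
          have := hs.1
          omega
        have hw : Win l i' (⟨(s : ℕ) - (j + 1), hsub⟩ : Fin (n - 1 - j)) := by
          refine ⟨?_, ?_⟩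
          · show i' ≤ (s : ℕ) - (j + 1)
            have := hs.1
            omega
          · show (s : ℕ) - (j + 1) < i' + l
            have h1 := hs.1
            have h2 := hs.2
            omega
        have := (del_lt_iff hj π _ t).mp (ht.2 _ hw)
        rwa [hpe] at this
  rw [himg, Finset.card_image_of_injective _ posEmb_injective]

lemma av_del_iff (ha : 1 ≤ a) (hl : 1 ≤ l) (hk : a + l - 1 ≤ k)
    (hjl : j < l) (hj : j + 1 ≤ n) (π : Equiv.Perm (Fin n))
    (hext : ExtV a l k (π ⟨j, by omega⟩)) :
    Av a l k (⇑π) ↔ Av a l k (⇑(del hj π)) := by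
  constructor
  · intro hav i' hi'
    rw [← loF_del_card hj π hi', ← hiF_del_card hj π hi']
    exact hav (i' + (j + 1)) (by omega)
  · intro hav i hi
    by_cases hij : i ≤ j
    · exact window_safe ha hk π hi ⟨j, by omega⟩ ⟨by show i ≤ j; omega, by show j < i + l; omega⟩ hext
    · have hi2 : (i - (j + 1)) + l ≤ n - 1 - j := by omega
      have heq : (i - (j + 1)) + (j + 1) = i := by omega
      have := hav (i - (j + 1)) hi2
      rwa [← loF_del_card hj π hi2, ← hiF_del_card hj π hi2, heq] at this

lemma card_filter_ge {c : ℕ} (hc : c ≤ n) :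
    (univ.filter fun v : Fin n => c ≤ (v : ℕ)).card = n - c := by
  have key := Finset.card_filter_add_card_filter_not
    (s := (univ : Finset (Fin n))) (p := fun v : Fin n => (v : ℕ) < c)
  have h2 : (univ.filter fun v : Fin n => ¬ ((v : ℕ) < c))
      = (univ.filter fun v : Fin n => c ≤ (v : ℕ)) := by
    apply filter_congr; intro t _; exact not_lt
  rw [card_filter_lt hc, h2, card_univ, Fintype.card_fin] at key
  omega

lemma card_ext_filter (ha : 1 ≤ a) (hl : 1 ≤ l) (hk : a + l - 1 ≤ k) (hn : k ≤ n) :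
    (univ.filter fun v : Fin n => ExtV a l k v).card = k - l := by
  have hsplit : (univ.filter fun v : Fin n => ExtV a l k v)
      = (univ.filter fun v : Fin n => (v : ℕ) < a - 1)
        ∪ (univ.filter fun v : Fin n => n - (k - l - (a - 1)) ≤ (v : ℕ)) := by
    ext u
    simp [ExtV, mem_filter, mem_union]
  have hdisj : Disjoint (univ.filter fun v : Fin n => (v : ℕ) < a - 1)
      (univ.filter fun v : Fin n => n - (k - l - (a - 1)) ≤ (v : ℕ)) := by
    rw [Finset.disjoint_left]
    intro u h1 h2
    simp only [mem_filter, mem_univ, true_and] at h1 h2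
    omega
  rw [hsplit, card_union_of_disjoint hdisj, card_filter_lt (by omega),
    card_filter_ge (by omega)]
  omega

lemma card_mid_filter (ha : 1 ≤ a) (hl : 1 ≤ l) (hk : a + l - 1 ≤ k) (hn : k ≤ n) :
    (univ.filter fun v : Fin n => ¬ ExtV a l k v).card = n - k + l := by
  have key := Finset.card_filter_add_card_filter_not
    (s := (univ : Finset (Fin n))) (p := fun v : Fin n => ExtV a l k v)
  rw [card_ext_filter ha hl hk hn, card_univ, Fintype.card_fin] at key
  omega

lemma nat_card_subtype (p : Fin n → Prop) :
    Nat.card {v : Fin n // p v} = (univ.filter p).card := by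
  rw [Nat.card_eq_fintype_card, Fintype.card_subtype]

lemma nat_card_sigma {ι : Type*} [Fintype ι] (f : ι → Type*) [∀ i, Finite (f i)] :
    Nat.card (Σ i, f i) = ∑ i, Nat.card (f i) := by
  letI : ∀ i, Fintype (f i) := fun i => Fintype.ofFinite _
  simp [Nat.card_eq_fintype_card, Fintype.card_sigma]

/-- Existence of a first extreme position, packaged for `Nat.find`. -/
lemma Qex (ha : 1 ≤ a) (hl : 1 ≤ l) (hk : a + l - 1 ≤ k) (hn : k ≤ n)
    (π : {π : Equiv.Perm (Fin n) // AvoidsP a l k π}) :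
    ∃ p, p < l ∧ ∃ hpn : p < n, ExtV a l k (π.1 ⟨p, hpn⟩) := by
  obtain ⟨p, hp, he⟩ := exists_ext ha hl hk hn π.1 ((avoids_iff_av ha hl hk π.1).mp π.2)
  exact ⟨p, hp, by omega, he⟩

/-- The first extreme position of an avoiding permutation. -/
noncomputable def fE (ha : 1 ≤ a) (hl : 1 ≤ l) (hk : a + l - 1 ≤ k) (hn : k ≤ n)
    (π : {π : Equiv.Perm (Fin n) // AvoidsP a l k π}) : Fin l :=
  ⟨Nat.find (Qex ha hl hk hn π), (Nat.find_spec (Qex ha hl hk hn π)).1⟩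

lemma fE_eq_iff (ha : 1 ≤ a) (hl : 1 ≤ l) (hk : a + l - 1 ≤ k) (hn : k ≤ n)
    (π : {π : Equiv.Perm (Fin n) // AvoidsP a l k π}) (jf : Fin l) :
    fE ha hl hk hn π = jf ↔
      ((jf : ℕ) < l ∧ ∃ hpn : (jf : ℕ) < n, ExtV a l k (π.1 ⟨(jf : ℕ), hpn⟩)) ∧
        ∀ p < (jf : ℕ), ¬ (p < l ∧ ∃ hpn : p < n, ExtV a l k (π.1 ⟨p, hpn⟩)) := by
  rw [← Nat.find_eq_iff (Qex ha hl hk hn π)]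
  constructor
  · intro h; exact congrArg Fin.val h
  · intro h; exact Fin.ext h


/-- Prefix built from `j` middles and one extreme. -/
def mkPre {j : ℕ} (w : Fin j ↪ {v : Fin n // ¬ ExtV a l k v})
    (ev : {v : Fin n // ExtV a l k v}) : Fin (j + 1) → Fin n :=
  fun s => if h : (s : ℕ) < j then (w ⟨s, h⟩ : {v : Fin n // ¬ ExtV a l k v}).1 else ev.1

lemma mkPre_lt {j : ℕ} (w : Fin j ↪ {v : Fin n // ¬ ExtV a l k v})
    (ev : {v : Fin n // ExtV a l k v}) {s : Fin (j + 1)} (h : (s : ℕ) < j) :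
    mkPre w ev s = (w ⟨s, h⟩ : {v : Fin n // ¬ ExtV a l k v}).1 := dif_pos h

lemma mkPre_ge {j : ℕ} (w : Fin j ↪ {v : Fin n // ¬ ExtV a l k v})
    (ev : {v : Fin n // ExtV a l k v}) {s : Fin (j + 1)} (h : ¬ (s : ℕ) < j) :
    mkPre w ev s = ev.1 := dif_neg h

lemma mkPre_inj {j : ℕ} (w : Fin j ↪ {v : Fin n // ¬ ExtV a l k v})
    (ev : {v : Fin n // ExtV a l k v}) : Function.Injective (mkPre w ev) := by
  intro s t h
  unfold mkPre at h
  by_cases hs : (s : ℕ) < j <;> by_cases ht : (t : ℕ) < j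
  · rw [dif_pos hs, dif_pos ht] at h
    have := w.injective (Subtype.ext h)
    rw [Fin.mk.injEq] at this
    exact Fin.ext this
  · rw [dif_pos hs, dif_neg ht] at h
    exact absurd (by rw [h]; exact ev.2) (w ⟨s, hs⟩).2
  · rw [dif_neg hs, dif_pos ht] at h
    exact absurd (by rw [← h]; exact ev.2) (w ⟨t, ht⟩).2
  · apply Fin.ext
    have hs1 := s.isLt
    have ht1 := t.isLt
    omega

lemma ins_at {j : ℕ} (hjn : j + 1 ≤ n) (w : Fin j ↪ {v : Fin n // ¬ ExtV a l k v})
    (ev : {v : Fin n // ExtV a l k v}) (σ : Equiv.Perm (Fin (n - 1 - j)))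
    (p : ℕ) (hp : p < j + 1) (hpn : p < n) :
    ins hjn (mkPre_inj w ev) σ ⟨p, hpn⟩ = mkPre w ev ⟨p, hp⟩ := by
  rw [ins_apply_lt hjn (mkPre_inj w ev) σ _ hp]

lemma ext_ins {j : ℕ} (hjn : j + 1 ≤ n) (w : Fin j ↪ {v : Fin n // ¬ ExtV a l k v})
    (ev : {v : Fin n // ExtV a l k v}) (σ : Equiv.Perm (Fin (n - 1 - j))) :
    ExtV a l k (ins hjn (mkPre_inj w ev) σ ⟨j, by omega⟩) := by
  rw [ins_at hjn w ev σ j (by omega) (by omega), mkPre_ge w ev (by simp)]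
  exact ev.2

lemma mid_ins {j : ℕ} (hjn : j + 1 ≤ n) (w : Fin j ↪ {v : Fin n // ¬ ExtV a l k v})
    (ev : {v : Fin n // ExtV a l k v}) (σ : Equiv.Perm (Fin (n - 1 - j)))
    (p : ℕ) (hp : p < j) (hpn : p < n) :
    ¬ ExtV a l k (ins hjn (mkPre_inj w ev) σ ⟨p, hpn⟩) := by
  rw [ins_at hjn w ev σ p (by omega) hpn, mkPre_lt w ev (by simpa using hp)]
  exact (w _).2

lemma avoids_ins (ha : 1 ≤ a) (hl : 1 ≤ l) (hk : a + l - 1 ≤ k) {j : ℕ}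
    (hjl : j < l) (hjn : j + 1 ≤ n) (w : Fin j ↪ {v : Fin n // ¬ ExtV a l k v})
    (ev : {v : Fin n // ExtV a l k v}) (σ : Equiv.Perm (Fin (n - 1 - j)))
    (hσ : AvoidsP a l k σ) : AvoidsP a l k (ins hjn (mkPre_inj w ev) σ) := by
  apply (avoids_iff_av ha hl hk _).mpr
  apply (av_del_iff ha hl hk hjl hjn _ (ext_ins hjn w ev σ)).mpr
  rw [del_ins]
  exact (avoids_iff_av ha hl hk σ).mp hσ

lemma card_fiber (ha : 1 ≤ a) (hl : 1 ≤ l) (hk : a + l - 1 ≤ k) (hn : k ≤ n) (jf : Fin l) :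
    Nat.card {π : {π : Equiv.Perm (Fin n) // AvoidsP a l k π} // fE ha hl hk hn π = jf}
      = (n - k + l).descFactorial (jf : ℕ) * ((k - l) * pP a l k (n - 1 - (jf : ℕ))) := by
  have hjl : (jf : ℕ) < l := jf.isLt
  have hjn : (jf : ℕ) + 1 ≤ n := by omega
  set j := (jf : ℕ) with hj
  have hfact : ∀ π : {π : Equiv.Perm (Fin n) // AvoidsP a l k π}, fE ha hl hk hn π = jf →
      (∀ p (hp : p < j), ¬ ExtV a l k (π.1 ⟨p, by omega⟩)) ∧
        ExtV a l k (π.1 ⟨j, by omega⟩) := by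
    intro π hfe
    rw [fE_eq_iff] at hfe
    obtain ⟨⟨-, hpn, he⟩, hmin⟩ := hfe
    refine ⟨?_, he⟩
    intro p hp hcon
    exact hmin p hp ⟨by omega, by omega, hcon⟩
  have e : {π : {π : Equiv.Perm (Fin n) // AvoidsP a l k π} // fE ha hl hk hn π = jf}
      ≃ (Fin j ↪ {v : Fin n // ¬ ExtV a l k v}) × {v : Fin n // ExtV a l k v}
          × {σ : Equiv.Perm (Fin (n - 1 - j)) // AvoidsP a l k σ} := by
    refine ⟨fun π => ⟨⟨fun t => ⟨π.1.1 ⟨(t : ℕ), by omega⟩, (hfact π.1 π.2).1 (t : ℕ) t.2⟩, ?_⟩,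
        ⟨π.1.1 ⟨j, by omega⟩, (hfact π.1 π.2).2⟩,
        ⟨del hjn π.1.1, ?_⟩⟩,
      fun x => ⟨⟨ins hjn (mkPre_inj x.1 x.2.1) x.2.2.1,
          avoids_ins ha hl hk hjl hjn x.1 x.2.1 x.2.2.1 x.2.2.2⟩, ?_⟩, ?_, ?_⟩
    · -- injectivity of the middle prefix
      intro s t hst
      rw [Subtype.mk.injEq] at hst
      have := π.1.1.injective hst
      rw [Fin.mk.injEq] at this
      exact Fin.ext this
    · -- the reduced suffix avoids
      exact (avoids_iff_av ha hl hk _).mpr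
        (((av_del_iff ha hl hk hjl hjn π.1.1 ((hfact π.1 π.2).2)).mp
          ((avoids_iff_av ha hl hk π.1.1).mp π.1.2)))
    · -- the inserted permutation lies in the fiber
      rw [fE_eq_iff]
      refine ⟨⟨hjl, by omega, ext_ins hjn x.1 x.2.1 x.2.2.1⟩, ?_⟩
      rintro p hp ⟨-, hpn, hE⟩
      exact mid_ins hjn x.1 x.2.1 x.2.2.1 p hp hpn hE
    · -- left inverse
      rintro ⟨⟨π, hav⟩, hfe⟩
      apply Subtype.ext
      apply Subtype.ext
      show ins hjn _ (del hjn π) = π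
      apply ins_del hjn π
      intro s
      by_cases h : (s : ℕ) < j
      · rw [mkPre_lt _ _ h]
        rfl
      · rw [mkPre_ge _ _ h]
        show π ⟨(s : ℕ), _⟩ = π ⟨j, _⟩
        congr 1
        apply Fin.ext
        show (s : ℕ) = j
        have := s.isLt
        omega
    · -- right inverse
      rintro ⟨w, ev, σ⟩
      simp only [Prod.mk.injEq]
      refine ⟨?_, ?_, ?_⟩
      · apply Function.Embedding.ext
        intro t
        apply Subtype.ext
        show ins hjn (mkPre_inj w ev) σ.1 ⟨(t : ℕ), _⟩ = (w t : {v : Fin n // ¬ ExtV a l k v}).1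
        rw [ins_at hjn w ev σ.1 (t : ℕ) (by omega) (by omega), mkPre_lt w ev (by simpa using t.isLt)]
      · apply Subtype.ext
        show ins hjn (mkPre_inj w ev) σ.1 ⟨j, _⟩ = ev.1
        rw [ins_at hjn w ev σ.1 j (by omega) (by omega), mkPre_ge w ev (by simp)]
      · apply Subtype.ext
        show del hjn (ins hjn (mkPre_inj w ev) σ.1) = σ.1
        exact del_ins hjn _ σ.1
  rw [Nat.card_congr e, Nat.card_prod, Nat.card_prod]
  have h1 : Nat.card (Fin j ↪ {v : Fin n // ¬ ExtV a l k v})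
      = (n - k + l).descFactorial j := by
    rw [Nat.card_eq_fintype_card, Fintype.card_embedding_eq, Fintype.card_fin,
      Fintype.card_subtype, card_mid_filter ha hl hk hn]
  have h2 : Nat.card {v : Fin n // ExtV a l k v} = k - l := by
    rw [nat_card_subtype]
    exact card_ext_filter ha hl hk hn
  rw [h1, h2]
  rfl

end PRec

/-- The recurrence from the proof of Theorem 3.2: for `1 ≤ a`, `a + l - 1 ≤ k`
and `n ≥ k`, `p(n) = (k-l)·Σ_{j=0}^{l-1} j!·binom(n-k+l, j)·p(n-1-j)`. -/
theorem pP_rec (a l k n : ℕ) (ha : 1 ≤ a) (hl : 1 ≤ l) (hk : a + l - 1 ≤ k) (hn : k ≤ n) :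
    pP a l k n = (k - l) *
      ∑ j ∈ Finset.range l, Nat.factorial j * Nat.choose (n - k + l) j * pP a l k (n - 1 - j) := by
  have h0 : pP a l k n = ∑ jf : Fin l,
      Nat.card {π : {π : Equiv.Perm (Fin n) // AvoidsP a l k π} //
        PRec.fE ha hl hk hn π = jf} := by
    rw [pP, Nat.card_congr (Equiv.sigmaFiberEquiv (PRec.fE ha hl hk hn)).symm,
      PRec.nat_card_sigma]
  rw [h0]
  have h1 : ∀ jf : Fin l,
      Nat.card {π : {π : Equiv.Perm (Fin n) // AvoidsP a l k π} //
        PRec.fE ha hl hk hn π = jf}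
      = (n - k + l).descFactorial (jf : ℕ) * ((k - l) * pP a l k (n - 1 - (jf : ℕ))) :=
    PRec.card_fiber ha hl hk hn
  rw [Finset.sum_congr rfl (fun jf _ => h1 jf)]
  rw [Fin.sum_univ_eq_sum_range
    (fun j => (n - k + l).descFactorial j * ((k - l) * pP a l k (n - 1 - j))) l]
  rw [Finset.mul_sum]
  apply Finset.sum_congr rfl
  intro j hj
  rw [Nat.descFactorial_eq_factorial_mul_choose]
  ring
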